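/- For a hyperbolic linear map A on ℝ^n (no eigenvalues on the unit circle), the only bounded full orbit is the zero orbit: if sup_{n∈ℤ} ‖A^n v‖ < ∞ then v = 0. -/

import Mathlib

open Matrix

/-- Map of the nonsingular inverse under a ring hom. -/
lemma map_nonsing_inv_aux {n : ℕ} (M : Matrix (Fin n) (Fin n) ℝ) (h : IsUnit M.det) :
    (M⁻¹).map (algebraMap ℝ ℂ) = (M.map (algebraMap ℝ ℂ))⁻¹ := by
  refine (Matrix.inv_eq_left_inv ?_).symm
  rw [← Matrix.map_mul, Matrix.nonsing_inv_mul M h, Matrix.map_one _ (map_zero _) (map_one _)]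

lemma coord_le_norm {n : ℕ} (y : EuclideanSpace ℝ (Fin n)) (i : Fin n) : |y i| ≤ ‖y‖ := by
  rw [EuclideanSpace.norm_eq, ← Real.sqrt_sq_eq_abs]
  apply Real.sqrt_le_sqrt
  have h := Finset.single_le_sum (f := fun j => ‖y j‖ ^ 2)
    (fun j _ => sq_nonneg _) (Finset.mem_univ i)
  simpa [Real.norm_eq_abs, sq_abs] using h

lemma map_zpow_aux {n : ℕ} (M : Matrix (Fin n) (Fin n) ℝ) (h : IsUnit M.det) (m : ℤ) :
    (M ^ m).map (algebraMap ℝ ℂ) = (M.map (algebraMap ℝ ℂ)) ^ m := by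
  cases m with
  | ofNat k =>
      rw [Int.ofNat_eq_coe, zpow_natCast, zpow_natCast]
      simpa only [RingHom.mapMatrix_apply] using map_pow (algebraMap ℝ ℂ).mapMatrix M k
  | negSucc k =>
      rw [zpow_negSucc, zpow_negSucc]
      have hk : (M.map (algebraMap ℝ ℂ)) ^ (k + 1) = (M ^ (k + 1)).map (algebraMap ℝ ℂ) := by
        simpa only [RingHom.mapMatrix_apply] using
          (map_pow (algebraMap ℝ ℂ).mapMatrix M (k + 1)).symm
      rw [hk, ← map_nonsing_inv_aux _ (by rw [Matrix.det_pow]; exact h.pow _)]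

/-- For a hyperbolic invertible linear map `A` on `ℝ^n` (no complex eigenvalue of modulus
one), the only bounded full orbit is the zero orbit: if `sup_{m ∈ ℤ} ‖A^m v‖ < ∞` then
`v = 0`. -/
theorem hyperbolic_bounded_orbit_zero (n : ℕ)
    (A : Matrix (Fin n) (Fin n) ℝ) (hA : IsUnit A)
    (hspec : ∀ μ ∈ spectrum ℂ (A.map (algebraMap ℝ ℂ)), ‖μ‖ ≠ 1)
    (v : EuclideanSpace ℝ (Fin n))
    (hbdd : ∃ C : ℝ, ∀ m : ℤ, ‖Matrix.toEuclideanLin (A ^ m) v‖ ≤ C) :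
    v = 0 := by
  by_contra hv
  obtain ⟨C, hC⟩ := hbdd
  have hAdet : IsUnit A.det := (Matrix.isUnit_iff_isUnit_det A).mp hA
  set B : Matrix (Fin n) (Fin n) ℂ := A.map (algebraMap ℝ ℂ) with hB
  have hBdet : IsUnit B.det := by
    rw [hB, ← RingHom.mapMatrix_apply, ← RingHom.map_det]
    exact hAdet.map _
  have hC0 : 0 ≤ C := le_trans (norm_nonneg _) (hC 0)
  -- the submodule of vectors with bounded full orbit
  let W : Submodule ℂ (Fin n → ℂ) :=
    { carrier := {w | ∃ D : ℝ, ∀ m : ℤ, ‖(B ^ m) *ᵥ w‖ ≤ D}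
      add_mem' := by
        rintro x y ⟨D1, h1⟩ ⟨D2, h2⟩
        refine ⟨D1 + D2, fun m => ?_⟩
        rw [Matrix.mulVec_add]
        exact le_trans (norm_add_le _ _) (add_le_add (h1 m) (h2 m))
      zero_mem' := ⟨0, fun m => by rw [Matrix.mulVec_zero]; simp⟩
      smul_mem' := by
        rintro c x ⟨D, h⟩
        refine ⟨‖c‖ * D, fun m => ?_⟩
        rw [Matrix.mulVec_smul, norm_smul]
        exact mul_le_mul_of_nonneg_left (h m) (norm_nonneg c) }
  -- the complexification of v lies in W
  have hWmem : (fun i => ((v i : ℝ) : ℂ)) ∈ W := by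
    refine ⟨C, fun m => ?_⟩
    rw [pi_norm_le_iff_of_nonneg hC0]
    intro i
    have hcoord : ((B ^ m) *ᵥ (fun i => ((v i : ℝ) : ℂ))) i
        = (((A ^ m) *ᵥ (fun i => v i)) i : ℂ) := by
      rw [hB, ← map_zpow_aux A hAdet m]
      exact (RingHom.map_mulVec (algebraMap ℝ ℂ) (A ^ m) (fun i => v i) i).symm
    rw [hcoord]
    have h1 : ‖(((A ^ m) *ᵥ (fun i => v i)) i : ℂ)‖ = |((A ^ m) *ᵥ (fun i => v i)) i| :=
      Complex.norm_real _
    rw [h1]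
    refine le_trans ?_ (hC m)
    have hco : (Matrix.toEuclideanLin (A ^ m) v) i = ((A ^ m) *ᵥ (fun i => v i)) i := rfl
    rw [← hco]
    exact coord_le_norm _ i
  -- W is nontrivial
  have hw0 : (fun i => ((v i : ℝ) : ℂ)) ≠ 0 := by
    intro h
    apply hv
    have hvi : ∀ i, v i = 0 := fun i => Complex.ofReal_eq_zero.mp (by simpa using congrFun h i)
    ext i
    simpa using hvi i
  have : Nontrivial W :=
    ⟨⟨⟨_, hWmem⟩, 0, fun hcontra => hw0 (by simpa [Subtype.ext_iff] using hcontra)⟩⟩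
  -- restrict B to W
  have hinv : ∀ x ∈ W, B.mulVecLin x ∈ W := by
    rintro x ⟨D, hD⟩
    refine ⟨D, fun m => ?_⟩
    have : (B ^ m) *ᵥ (B.mulVecLin x) = (B ^ (m + 1)) *ᵥ x := by
      rw [Matrix.mulVecLin_apply, Matrix.mulVec_mulVec, ← Matrix.zpow_add_one hBdet m]
    rw [this]
    exact hD (m + 1)
  let g : Module.End ℂ W := (B.mulVecLin).restrict hinv
  obtain ⟨μ, hμ⟩ := Module.End.exists_eigenvalue g
  obtain ⟨u', hu'⟩ := hμ.exists_hasEigenvector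
  have hgu : B *ᵥ (u' : Fin n → ℂ) = μ • (u' : Fin n → ℂ) := by
    have h2 : B.mulVecLin (u' : Fin n → ℂ) = μ • (u' : Fin n → ℂ) :=
      congrArg Subtype.val hu'.apply_eq_smul
    simpa [Matrix.mulVecLin_apply] using h2
  have hu0 : (u' : Fin n → ℂ) ≠ 0 := by
    intro h
    exact hu'.2 (Subtype.ext h)
  -- μ is in the spectrum of B
  have hμspec : μ ∈ spectrum ℂ B := by
    rw [spectrum.mem_iff]
    intro hUnit
    have hdet : IsUnit (algebraMap ℂ (Matrix (Fin n) (Fin n) ℂ) μ - B).det :=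
      (Matrix.isUnit_iff_isUnit_det _).mp hUnit
    have hker : (algebraMap ℂ (Matrix (Fin n) (Fin n) ℂ) μ - B) *ᵥ (u' : Fin n → ℂ) = 0 := by
      rw [Matrix.sub_mulVec, hgu]
      rw [Algebra.algebraMap_eq_smul_one]
      rw [Matrix.smul_mulVec, Matrix.one_mulVec]
      simp
    apply hu0
    have := congrArg (fun y => (algebraMap ℂ (Matrix (Fin n) (Fin n) ℂ) μ - B)⁻¹ *ᵥ y) hker
    simpa [Matrix.mulVec_mulVec, Matrix.nonsing_inv_mul _ hdet] using this
  have hμ0 : μ ≠ 0 := by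
    intro h
    apply hu0
    have hker : B *ᵥ (u' : Fin n → ℂ) = 0 := by rw [hgu, h, zero_smul]
    have := congrArg (fun y => B⁻¹ *ᵥ y) hker
    simpa [Matrix.mulVec_mulVec, Matrix.nonsing_inv_mul _ hBdet] using this
  -- eigen-equation for integer powers
  have hpow : ∀ k : ℕ, (B ^ k) *ᵥ (u' : Fin n → ℂ) = μ ^ k • (u' : Fin n → ℂ) := by
    intro k
    induction k with
    | zero => simp
    | succ k ih =>
        rw [pow_succ, ← Matrix.mulVec_mulVec, hgu, Matrix.mulVec_smul, ih, smul_smul,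
          pow_succ, mul_comm]
  have hzpow : ∀ m : ℤ, (B ^ m) *ᵥ (u' : Fin n → ℂ) = μ ^ m • (u' : Fin n → ℂ) := by
    intro m
    cases m with
    | ofNat k => rw [Int.ofNat_eq_coe, zpow_natCast, zpow_natCast]; exact hpow k
    | negSucc k =>
        rw [zpow_negSucc, zpow_negSucc]
        have h1 : (B ^ (k + 1))⁻¹ *ᵥ ((B ^ (k + 1)) *ᵥ (u' : Fin n → ℂ)) = (u' : Fin n → ℂ) := by
          rw [Matrix.mulVec_mulVec, Matrix.nonsing_inv_mul _ (by simpa using hBdet.pow (k+1)),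
            Matrix.one_mulVec]
        rw [hpow (k+1), Matrix.mulVec_smul] at h1
        have h2 : (B ^ (k + 1))⁻¹ *ᵥ (u' : Fin n → ℂ) = (μ ^ (k + 1))⁻¹ • (u' : Fin n → ℂ) := by
          have hμk : (μ : ℂ) ^ (k + 1) ≠ 0 := pow_ne_zero _ hμ0
          calc (B ^ (k + 1))⁻¹ *ᵥ (u' : Fin n → ℂ)
              = (μ ^ (k+1))⁻¹ • (μ ^ (k + 1) • ((B ^ (k + 1))⁻¹ *ᵥ (u' : Fin n → ℂ))) := by
                rw [smul_smul, inv_mul_cancel₀ hμk, one_smul]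
            _ = (μ ^ (k+1))⁻¹ • (u' : Fin n → ℂ) := by rw [h1]
        rw [h2]
  -- boundedness contradiction
  obtain ⟨D, hD⟩ := u'.2
  have hnorm : ∀ m : ℤ, ‖μ‖ ^ m * ‖(u' : Fin n → ℂ)‖ ≤ D := by
    intro m
    have := hD m
    rw [hzpow m, norm_smul, norm_zpow] at this
    exact this
  have hu'norm : 0 < ‖(u' : Fin n → ℂ)‖ := norm_pos_iff.mpr hu0
  set r : ℝ := ‖μ‖ with hr
  have hrpos : 0 < r := norm_pos_iff.mpr hμ0
  have hrne : r ≠ 1 := hspec μ hμspec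
  rcases lt_or_gt_of_ne hrne with hlt | hgt
  · -- r < 1 : use negative powers
    have h1r : 1 < r⁻¹ := (one_lt_inv₀ hrpos).mpr hlt
    obtain ⟨k, hk⟩ := pow_unbounded_of_one_lt (D / ‖(u' : Fin n → ℂ)‖) h1r
    have := hnorm (-(k : ℤ))
    rw [_root_.zpow_neg, zpow_natCast, ← inv_pow] at this
    have hgtD : D / ‖(u' : Fin n → ℂ)‖ * ‖(u' : Fin n → ℂ)‖ < r⁻¹ ^ k * ‖(u' : Fin n → ℂ)‖ :=
      mul_lt_mul_of_pos_right hk hu'norm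
    rw [div_mul_cancel₀ _ (ne_of_gt hu'norm)] at hgtD
    linarith
  · obtain ⟨k, hk⟩ := pow_unbounded_of_one_lt (D / ‖(u' : Fin n → ℂ)‖) hgt
    have := hnorm (k : ℤ)
    rw [zpow_natCast] at this
    have hgtD : D / ‖(u' : Fin n → ℂ)‖ * ‖(u' : Fin n → ℂ)‖ < r ^ k * ‖(u' : Fin n → ℂ)‖ :=
      mul_lt_mul_of_pos_right hk hu'norm
    rw [div_mul_cancel₀ _ (ne_of_gt hu'norm)] at hgtD
    linarith
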